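/- Let K be a field of characteristic zero and let Q be a finite set of cardinality n carrying two partial orders ≼ and ≼' such that for all distinct a, b ∈ Q, a and b are comparable for ≼ if and only if they are incomparable for ≼'. Then the dimension of the relation space R_{(Q,≼')} equals 4·int(Q,≼') − 3·n, which also equals the dimension of the annihilator R_{(Q,≼)}^⊥ of R_{(Q,≼)} with respect to the bilinear form ⟨·,·⟩. -/

import Mathlib

open scoped Classical

/-- The minimum of two comparable elements with respect to an explicit partial order. -/
noncomputable def pminP {Q : Type*} (P : PartialOrder Q) (a b : Q) : Q :=
  if P.le a b then a else b

/-- The standard basis vector `e(a,i,b)` of `V = (Q × {1,2} × Q) → K` (with `0 : Fin 2`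
encoding position `1` and `1 : Fin 2` encoding position `2`). -/
noncomputable def e (K : Type*) [Field K] {Q : Type*} (a : Q) (i : Fin 2) (b : Q) :
    (Q × Fin 2 × Q) → K :=
  fun p => if p = (a, i, b) then 1 else 0

/-- The space of relations `R_(Q,≼)` for an explicit partial order `≼` on `Q`: the span
of `e(a,1,b) − e(a↑b,2,a↑b)` and `e(a↑b,1,a↑b) − e(a,2,b)` for `≼`-comparable `a, b`. -/
noncomputable def relSpaceP (K : Type*) [Field K] {Q : Type*} (P : PartialOrder Q) :
    Submodule K ((Q × Fin 2 × Q) → K) :=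
  Submodule.span K
    {x | ∃ a b : Q, (P.le a b ∨ P.le b a) ∧
      (x = e K a 0 b - e K (pminP P a b) 1 (pminP P a b) ∨
       x = e K (pminP P a b) 0 (pminP P a b) - e K a 1 b)}

/-- The bilinear form on `V` with `⟨e(a,i,b), e(a',i',b')⟩ = 1` if `(a,b) = (a',b')` and
`i = i' = 1`, `= −1` if `(a,b) = (a',b')` and `i = i' = 2`, and `0` otherwise. -/
noncomputable def bform {K : Type*} [Field K] {Q : Type*} [Fintype Q]
    (u w : (Q × Fin 2 × Q) → K) : K :=
  ∑ a : Q, ∑ b : Q, (u (a, 0, b) * w (a, 0, b) - u (a, 1, b) * w (a, 1, b))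

lemma bform_add {K : Type*} [Field K] {Q : Type*} [Fintype Q]
    (r u v : (Q × Fin 2 × Q) → K) :
    bform r (u + v) = bform r u + bform r v := by
  unfold bform
  rw [← Finset.sum_add_distrib]
  refine Finset.sum_congr rfl fun a _ => ?_
  rw [← Finset.sum_add_distrib]
  refine Finset.sum_congr rfl fun b _ => ?_
  simp only [Pi.add_apply]
  ring

lemma bform_smul {K : Type*} [Field K] {Q : Type*} [Fintype Q]
    (c : K) (r v : (Q × Fin 2 × Q) → K) :
    bform r (c • v) = c * bform r v := by
  unfold bform
  rw [Finset.mul_sum]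
  refine Finset.sum_congr rfl fun a _ => ?_
  rw [Finset.mul_sum]
  refine Finset.sum_congr rfl fun b _ => ?_
  simp only [Pi.smul_apply, smul_eq_mul]
  ring

/-- The annihilator `S^⊥ = {v ∈ V : ⟨r, v⟩ = 0 for all r ∈ S}` of a subspace `S` of `V`
with respect to the bilinear form `⟨·,·⟩`. -/
noncomputable def annih (K : Type*) [Field K] (Q : Type*) [Fintype Q]
    (S : Submodule K ((Q × Fin 2 × Q) → K)) : Submodule K ((Q × Fin 2 × Q) → K) where
  carrier := {v | ∀ r ∈ S, bform r v = 0}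
  add_mem' := by
    intro u v hu hv r hr
    rw [bform_add, hu r hr, hv r hr, add_zero]
  zero_mem' := by
    intro r hr
    simp [bform]
  smul_mem' := by
    intro c v hv r hr
    rw [bform_smul, hv r hr, mul_zero]


/-! ### Auxiliary lemmas -/

section Aux

@[simp] lemma pminP_self {Q : Type*} (P : PartialOrder Q) (a : Q) : pminP P a a = a := by
  unfold pminP; split <;> rfl

@[simp] lemma fin01 : (0 : Fin 2) ≠ 1 := by decide
@[simp] lemma fin10 : (1 : Fin 2) ≠ 0 := by decide

lemma e_apply (K : Type*) [Field K] {Q : Type*} (a : Q) (i : Fin 2) (b : Q)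
    (x : Q) (j : Fin 2) (y : Q) :
    e K a i b (x, j, y) = if x = a ∧ j = i ∧ y = b then 1 else 0 := by
  simp [e, Prod.ext_iff]

/-- The spanning family of `relSpaceP`. -/
noncomputable def relFam (K : Type*) [Field K] {Q : Type*} (P : PartialOrder Q) :
    Q ⊕ ({p : Q × Q // p.1 ≠ p.2 ∧ (P.le p.1 p.2 ∨ P.le p.2 p.1)} × Fin 2) →
      (Q × Fin 2 × Q) → K :=
  fun x => match x with
  | .inl a => e K a 0 a - e K a 1 a
  | .inr (q, i) =>
      if i = 0 then e K q.1.1 0 q.1.2 - e K (pminP P q.1.1 q.1.2) 1 (pminP P q.1.1 q.1.2)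
      else e K (pminP P q.1.1 q.1.2) 0 (pminP P q.1.1 q.1.2) - e K q.1.1 1 q.1.2

lemma span_relFam (K : Type*) [Field K] {Q : Type*} (P : PartialOrder Q) :
    Submodule.span K (Set.range (relFam K P)) = relSpaceP K P := by
  apply le_antisymm
  · rw [Submodule.span_le]
    rintro _ ⟨x, rfl⟩
    apply Submodule.subset_span
    match x with
    | .inl a => exact ⟨a, a, Or.inl (P.le_refl a), Or.inl (by simp [relFam, pminP_self])⟩
    | .inr (⟨⟨a, b⟩, hne, hc⟩, i) =>
      refine ⟨a, b, hc, ?_⟩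
      by_cases hi : i = 0
      · left; simp [relFam, hi]
      · right; simp [relFam, hi]
  · rw [relSpaceP, Submodule.span_le]
    rintro x ⟨a, b, hc, hx⟩
    apply Submodule.subset_span
    by_cases hab : a = b
    · subst hab
      refine ⟨.inl a, ?_⟩
      rcases hx with rfl | rfl <;> simp [relFam, pminP_self]
    · rcases hx with rfl | rfl
      · exact ⟨.inr (⟨(a, b), hab, hc⟩, 0), by simp [relFam]⟩
      · exact ⟨.inr (⟨(a, b), hab, hc⟩, 1), by simp [relFam]⟩

lemma linIndep_relFam (K : Type*) [Field K] {Q : Type*} [Fintype Q] (P : PartialOrder Q) :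
    LinearIndependent K (relFam K P) := by
  rw [Fintype.linearIndependent_iff]
  intro g hg
  have hval : ∀ pt : Q × Fin 2 × Q, (∑ i, g i * relFam K P i pt) = 0 := by
    intro pt
    have := congrFun hg pt
    simpa [Finset.sum_apply] using this
  have hinr : ∀ q i, g (.inr (q, i)) = 0 := by
    rintro ⟨⟨a, b⟩, hne, hc⟩ i
    fin_cases i
    · have h := hval (a, 0, b)
      rw [Finset.sum_eq_single (Sum.inr (⟨(a, b), hne, hc⟩, (0 : Fin 2)))] at h
      · simpa [relFam, e_apply, hne] using h
      · rintro (c | ⟨⟨⟨a', b'⟩, hne', hc'⟩, i'⟩) - hj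
        · have hx : ¬(a = c ∧ b = c) := by rintro ⟨rfl, rfl⟩; exact hne rfl
          simp [relFam, e_apply, hx]
        · fin_cases i'
          · have hx : ¬(a = a' ∧ b = b') := by rintro ⟨rfl, rfl⟩; exact hj rfl
            simp [relFam, e_apply, hx]
          · have hx : ¬(a = pminP P a' b' ∧ b = pminP P a' b') := by
              rintro ⟨h1, h2⟩; exact hne (h1.trans h2.symm)
            simp [relFam, e_apply, hx]
      · simp
    · have h := hval (a, 1, b)
      rw [Finset.sum_eq_single (Sum.inr (⟨(a, b), hne, hc⟩, (1 : Fin 2)))] at h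
      · have hx : ¬(a = pminP P a b ∧ b = pminP P a b) := by
          rintro ⟨h1, h2⟩; exact hne (h1.trans h2.symm)
        simpa [relFam, e_apply, hx] using h
      · rintro (c | ⟨⟨⟨a', b'⟩, hne', hc'⟩, i'⟩) - hj
        · have hx : ¬(a = c ∧ b = c) := by rintro ⟨rfl, rfl⟩; exact hne rfl
          simp [relFam, e_apply, hx]
        · fin_cases i'
          · have hx : ¬(a = pminP P a' b' ∧ b = pminP P a' b') := by
              rintro ⟨h1, h2⟩; exact hne (h1.trans h2.symm)
            simp [relFam, e_apply, hx]
          · have hx : ¬(a = a' ∧ b = b') := by rintro ⟨rfl, rfl⟩; exact hj rfl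
            simp [relFam, e_apply, hx]
      · simp
  refine fun i => ?_
  rcases i with a | ⟨q, i⟩
  · have h := hval (a, 0, a)
    rw [Finset.sum_eq_single (Sum.inl a)] at h
    · simpa [relFam, e_apply] using h
    · rintro (c | ⟨q', i'⟩) - hj
      · have hx : ¬(a = c) := by rintro rfl; exact hj rfl
        simp [relFam, e_apply, hx]
      · simp [hinr]
    · simp
  · exact hinr q i

lemma card_diag {Q : Type*} [Fintype Q] :
    (Finset.univ.filter fun p : Q × Q => p.1 = p.2).card = Fintype.card Q := by
  have h : (Finset.univ.filter fun p : Q × Q => p.1 = p.2)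
      = Finset.univ.image (fun a : Q => (a, a)) := by
    ext ⟨x, y⟩
    simp only [Finset.mem_filter, Finset.mem_univ, true_and, Finset.mem_image, Prod.ext_iff]
    constructor
    · rintro rfl; exact ⟨x, rfl, rfl⟩
    · rintro ⟨a, rfl, rfl⟩; rfl
  rw [h, Finset.card_image_of_injective _ (fun a b hab => (Prod.ext_iff.1 hab).1),
    Finset.card_univ]

lemma card_comp {Q : Type*} [Fintype Q] (P : PartialOrder Q) :
    Fintype.card {p : Q × Q // p.1 ≠ p.2 ∧ (P.le p.1 p.2 ∨ P.le p.2 p.1)} + 2 * Fintype.card Q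
      = 2 * Fintype.card {p : Q × Q // P.le p.1 p.2} := by
  simp only [Fintype.card_subtype]
  have h1 : (Finset.univ.filter fun p : Q × Q => p.1 ≠ p.2 ∧ (P.le p.1 p.2 ∨ P.le p.2 p.1)).card
      = (Finset.univ.filter fun p : Q × Q => p.1 ≠ p.2 ∧ P.le p.1 p.2).card
        + (Finset.univ.filter fun p : Q × Q => p.1 ≠ p.2 ∧ P.le p.2 p.1).card := by
    rw [← Finset.card_union_of_disjoint, ← Finset.filter_or]
    · congr 1
      apply Finset.filter_congr
      intro p _
      constructor
      · rintro ⟨hne, hc | hc⟩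
        · exact Or.inl ⟨hne, hc⟩
        · exact Or.inr ⟨hne, hc⟩
      · rintro (⟨hne, hc⟩ | ⟨hne, hc⟩)
        · exact ⟨hne, Or.inl hc⟩
        · exact ⟨hne, Or.inr hc⟩
    · rw [Finset.disjoint_left]
      rintro p hp hp'
      simp only [Finset.mem_filter] at hp hp'
      exact hp.2.1 (P.le_antisymm _ _ hp.2.2 hp'.2.2)
  have h2 : (Finset.univ.filter fun p : Q × Q => P.le p.1 p.2).card
      = (Finset.univ.filter fun p : Q × Q => p.1 ≠ p.2 ∧ P.le p.1 p.2).card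
        + Fintype.card Q := by
    rw [← card_diag (Q := Q), ← Finset.card_union_of_disjoint, ← Finset.filter_or]
    · congr 1
      apply Finset.filter_congr
      intro p _
      constructor
      · intro hle
        by_cases he : p.1 = p.2
        · exact Or.inr he
        · exact Or.inl ⟨he, hle⟩
      · rintro (⟨-, hle⟩ | he)
        · exact hle
        · rw [he]
    · rw [Finset.disjoint_left]
      rintro p hp hp'
      simp only [Finset.mem_filter] at hp hp'
      exact hp.2.1 hp'.2
  have h3 : (Finset.univ.filter fun p : Q × Q => p.1 ≠ p.2 ∧ P.le p.2 p.1).card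
      = (Finset.univ.filter fun p : Q × Q => p.1 ≠ p.2 ∧ P.le p.1 p.2).card := by
    apply Finset.card_bij (fun p _ => (p.2, p.1))
    · rintro ⟨x, y⟩ hp
      simp only [Finset.mem_filter, Finset.mem_univ, true_and] at hp ⊢
      exact ⟨fun h => hp.1 h.symm, hp.2⟩
    · rintro ⟨x, y⟩ - ⟨x', y'⟩ - hxy
      simp only [Prod.ext_iff] at hxy ⊢
      exact ⟨hxy.2, hxy.1⟩
    · rintro ⟨x, y⟩ hp
      simp only [Finset.mem_filter, Finset.mem_univ, true_and] at hp
      refine ⟨(y, x), ?_, rfl⟩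
      simp only [Finset.mem_filter, Finset.mem_univ, true_and]
      exact ⟨fun h => hp.1 h.symm, hp.2⟩
  omega

lemma finrank_relSpaceP (K : Type*) [Field K] {Q : Type*} [Fintype Q] (P : PartialOrder Q) :
    Module.finrank K (relSpaceP K P) + 3 * Fintype.card Q
      = 4 * Fintype.card {p : Q × Q // P.le p.1 p.2} := by
  rw [← span_relFam, finrank_span_eq_card (linIndep_relFam K P)]
  have := card_comp P
  simp only [Fintype.card_sum, Fintype.card_prod, Fintype.card_fin]
  omega

section B
variable {K : Type*} [Field K] {Q : Type*} [Fintype Q]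

lemma bform_comm (u w : (Q × Fin 2 × Q) → K) : bform u w = bform w u := by
  unfold bform
  refine Finset.sum_congr rfl fun a _ => Finset.sum_congr rfl fun b _ => by ring

/-- `bform` as a bilinear form. -/
noncomputable def Bf (K : Type*) [Field K] (Q : Type*) [Fintype Q] :
    LinearMap.BilinForm K ((Q × Fin 2 × Q) → K) :=
  LinearMap.mk₂ K bform
    (fun u v w => by rw [bform_comm, bform_add, bform_comm w u, bform_comm w v])
    (fun c u w => by rw [bform_comm, bform_smul, bform_comm w u, smul_eq_mul])
    (fun u v w => bform_add u v w)
    (fun c u w => by rw [bform_smul, smul_eq_mul])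

@[simp] lemma Bf_apply (u w : (Q × Fin 2 × Q) → K) : Bf K Q u w = bform u w := rfl

lemma bform_e0 (v : (Q × Fin 2 × Q) → K) (a b : Q) :
    bform v (e K a 0 b) = v (a, 0, b) := by
  unfold bform
  rw [Finset.sum_eq_single a
      (fun x _ hx => Finset.sum_eq_zero fun y _ => by simp [e_apply, hx])
      (fun hx => absurd (Finset.mem_univ a) hx),
    Finset.sum_eq_single b
      (fun y _ hy => by simp [e_apply, hy])
      (fun hy => absurd (Finset.mem_univ b) hy)]
  simp [e_apply]

lemma bform_e1 (v : (Q × Fin 2 × Q) → K) (a b : Q) :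
    bform v (e K a 1 b) = - v (a, 1, b) := by
  unfold bform
  rw [Finset.sum_eq_single a
      (fun x _ hx => Finset.sum_eq_zero fun y _ => by simp [e_apply, hx])
      (fun hx => absurd (Finset.mem_univ a) hx),
    Finset.sum_eq_single b
      (fun y _ hy => by simp [e_apply, hy])
      (fun hy => absurd (Finset.mem_univ b) hy)]
  simp [e_apply]

lemma Bf_nondeg : (Bf K Q).Nondegenerate := by
  refine (LinearMap.IsRefl.nondegenerate_iff_separatingLeft
    (fun u w h => by rw [Bf_apply, bform_comm]; exact h)).2 ?_
  intro v hv
  funext p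
  obtain ⟨a, i, b⟩ := p
  fin_cases i
  · have h := hv (e K a 0 b)
    rw [Bf_apply, bform_e0] at h
    simpa using h
  · have h := hv (e K a 1 b)
    rw [Bf_apply, bform_e1] at h
    simpa using h

lemma Bf_refl : (Bf K Q).IsRefl := fun u w h => by
  rw [Bf_apply, bform_comm]; exact h

lemma annih_eq_orth (S : Submodule K ((Q × Fin 2 × Q) → K)) :
    annih K Q S = (Bf K Q).orthogonal S :=
  le_antisymm (fun v hv r hr => hv r hr) (fun v hv r hr => hv r hr)

end B

end Aux

/-- For two complementary partial orders `≼` and `≼'` on a finite set `Q` (distinct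
elements are `≼`-comparable iff `≼'`-incomparable, as for a thin forest poset and its
dual), the dimension of `R_(Q,≼')` equals `4·int(Q,≼') − 3·#Q`, which also equals the
dimension of the annihilator `R_(Q,≼)^⊥` (the space of relations of `As(Q,≼)^!`). -/
theorem finrank_relSpace_and_annihilator {K Q : Type*} [Field K] [CharZero K]
    [Fintype Q] (P P' : PartialOrder Q)
    (h : ∀ a b : Q, a ≠ b → ((P.le a b ∨ P.le b a) ↔ ¬ (P'.le a b ∨ P'.le b a))) :
    Module.finrank K (relSpaceP K P') =
      4 * Set.ncard {p : Q × Q | P'.le p.1 p.2} - 3 * Fintype.card Q ∧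
    Module.finrank K (annih K Q (relSpaceP K P)) =
      4 * Set.ncard {p : Q × Q | P'.le p.1 p.2} - 3 * Fintype.card Q := by
  classical
  have hncard : Set.ncard {p : Q × Q | P'.le p.1 p.2}
      = Fintype.card {p : Q × Q // P'.le p.1 p.2} := by
    rw [Set.ncard_eq_toFinset_card']
    simp [Set.toFinset_setOf, Fintype.card_subtype]
  have hpart : Fintype.card {p : Q × Q // p.1 ≠ p.2 ∧ (P.le p.1 p.2 ∨ P.le p.2 p.1)}
      + Fintype.card {p : Q × Q // p.1 ≠ p.2 ∧ (P'.le p.1 p.2 ∨ P'.le p.2 p.1)}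
      + Fintype.card Q = Fintype.card Q * Fintype.card Q := by
    simp only [Fintype.card_subtype]
    have hu : ((Finset.univ.filter fun p : Q × Q => p.1 ≠ p.2 ∧ (P.le p.1 p.2 ∨ P.le p.2 p.1))
        ∪ (Finset.univ.filter fun p : Q × Q => p.1 ≠ p.2 ∧ (P'.le p.1 p.2 ∨ P'.le p.2 p.1)))
        ∪ (Finset.univ.filter fun p : Q × Q => p.1 = p.2) = Finset.univ := by
      ext p
      simp only [Finset.mem_union, Finset.mem_filter, Finset.mem_univ, true_and, iff_true]
      by_cases he : p.1 = p.2
      · exact Or.inr he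
      · refine Or.inl ?_
        by_cases hcp : P.le p.1 p.2 ∨ P.le p.2 p.1
        · exact Or.inl ⟨he, hcp⟩
        · refine Or.inr ⟨he, ?_⟩
          by_contra hc'
          exact hcp ((h p.1 p.2 he).2 hc')
    have hd1 : Disjoint
        (Finset.univ.filter fun p : Q × Q => p.1 ≠ p.2 ∧ (P.le p.1 p.2 ∨ P.le p.2 p.1))
        (Finset.univ.filter fun p : Q × Q => p.1 ≠ p.2 ∧ (P'.le p.1 p.2 ∨ P'.le p.2 p.1)) := by
      rw [Finset.disjoint_left]
      rintro p hp hp'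
      simp only [Finset.mem_filter] at hp hp'
      exact (h p.1 p.2 hp.2.1).1 hp.2.2 hp'.2.2
    have hd2 : Disjoint
        ((Finset.univ.filter fun p : Q × Q => p.1 ≠ p.2 ∧ (P.le p.1 p.2 ∨ P.le p.2 p.1))
          ∪ (Finset.univ.filter fun p : Q × Q => p.1 ≠ p.2 ∧ (P'.le p.1 p.2 ∨ P'.le p.2 p.1)))
        (Finset.univ.filter fun p : Q × Q => p.1 = p.2) := by
      rw [Finset.disjoint_left]
      rintro p hp hp'
      simp only [Finset.mem_union, Finset.mem_filter] at hp hp'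
      rcases hp with hp | hp <;> exact hp.2.1 hp'.2
    have := congrArg Finset.card hu
    rw [Finset.card_union_of_disjoint hd2, Finset.card_union_of_disjoint hd1,
      card_diag, Finset.card_univ, Fintype.card_prod] at this
    omega
  have hP := finrank_relSpaceP K P
  have hP' := finrank_relSpaceP K P'
  have hccP := card_comp P
  have hccP' := card_comp P'
  have horth : Module.finrank K (annih K Q (relSpaceP K P))
      = Module.finrank K ((Q × Fin 2 × Q) → K) - Module.finrank K (relSpaceP K P) := by
    rw [annih_eq_orth]
    exact LinearMap.BilinForm.finrank_orthogonal Bf_nondeg _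
  have hV : Module.finrank K ((Q × Fin 2 × Q) → K)
      = 2 * (Fintype.card Q * Fintype.card Q) := by
    rw [Module.finrank_fintype_fun_eq_card]
    simp [Fintype.card_prod]
    ring
  rw [hncard]
  rw [hV] at horth
  obtain ⟨m, hm⟩ : ∃ m, Fintype.card Q * Fintype.card Q = m := ⟨_, rfl⟩
  rw [hm] at hpart horth
  exact ⟨by omega, by omega⟩
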